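/- Let f : ℝ → ℝ be defined by f(θ) = 2 + cos θ · log((1 − cos θ)/(1 + cos θ)). Then there exists a unique θ₀ ∈ (0, π/2) with f(θ₀) = 0; moreover this zero satisfies π/6 < θ₀ < π/3. -/
import Mathlib

open Real Set

/-- Monotonicity helper: the profile is strictly increasing on `(0, π/2)`. -/
lemma stmt17_mono {θ₁ θ₂ : ℝ} (h1 : θ₁ ∈ Set.Ioo (0 : ℝ) (Real.pi / 2))
    (h2 : θ₂ ∈ Set.Ioo (0 : ℝ) (Real.pi / 2)) (hlt : θ₁ < θ₂) :
    2 + Real.cos θ₁ * Real.log ((1 - Real.cos θ₁) / (1 + Real.cos θ₁)) <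
      2 + Real.cos θ₂ * Real.log ((1 - Real.cos θ₂) / (1 + Real.cos θ₂)) := by
  obtain ⟨h10, h1p⟩ := h1
  obtain ⟨h20, h2p⟩ := h2
  have hpi := Real.pi_pos
  set c₁ := Real.cos θ₁ with hc1
  set c₂ := Real.cos θ₂ with hc2
  have hcc : c₂ < c₁ :=
    Real.cos_lt_cos_of_nonneg_of_le_pi h10.le (by linarith) hlt
  have hc2pos : 0 < c₂ :=
    Real.cos_pos_of_mem_Ioo ⟨by linarith, h2p⟩
  have hc1lt1 : c₁ < 1 := by
    have := Real.cos_lt_cos_of_nonneg_of_le_pi (le_refl 0) (by linarith) h10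
    rwa [Real.cos_zero] at this
  have hc2lt1 : c₂ < 1 := lt_trans hcc hc1lt1
  have hc1pos : 0 < c₁ := lt_trans hc2pos hcc
  have h1num : 0 < 1 - c₁ := by linarith
  have h2num : 0 < 1 - c₂ := by linarith
  have h1den : 0 < 1 + c₁ := by linarith
  have h2den : 0 < 1 + c₂ := by linarith
  have harg1 : 0 < (1 - c₁) / (1 + c₁) := div_pos h1num h1den
  have harg2 : 0 < (1 - c₂) / (1 + c₂) := div_pos h2num h2den
  have hargs : (1 - c₁) / (1 + c₁) < (1 - c₂) / (1 + c₂) := by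
    rw [div_lt_div_iff₀ h1den h2den]
    nlinarith
  have hL : Real.log ((1 - c₁) / (1 + c₁)) < Real.log ((1 - c₂) / (1 + c₂)) :=
    Real.log_lt_log harg1 hargs
  have hL2neg : Real.log ((1 - c₂) / (1 + c₂)) < 0 := by
    apply Real.log_neg harg2
    rw [div_lt_one h2den]; linarith
  have h1 : c₁ * Real.log ((1 - c₁) / (1 + c₁)) < c₁ * Real.log ((1 - c₂) / (1 + c₂)) :=
    mul_lt_mul_of_pos_left hL hc1pos
  have h2 : c₁ * Real.log ((1 - c₂) / (1 + c₂)) < c₂ * Real.log ((1 - c₂) / (1 + c₂)) :=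
    mul_lt_mul_of_neg_right hcc hL2neg
  linarith

lemma stmt17_exp_lt : Real.exp (7 / 6 : ℝ) < 3.25 := by
  have h1 : Real.exp 7 < 3.25 ^ (6 : ℕ) := by
    have he := Real.exp_one_lt_d9
    calc Real.exp 7 = Real.exp 1 ^ (7 : ℕ) := by
          rw [← Real.exp_nat_mul]; norm_num
      _ < 2.7182818286 ^ (7 : ℕ) :=
          pow_lt_pow_left₀ he (Real.exp_pos 1).le (by norm_num)
      _ < 3.25 ^ (6 : ℕ) := by norm_num
  have h2 : Real.exp (7 / 6 : ℝ) ^ (6 : ℕ) = Real.exp 7 := by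
    rw [← Real.exp_nat_mul]; norm_num
  exact lt_of_pow_lt_pow_left₀ 6 (by norm_num) (by rw [h2]; exact h1)

lemma stmt17_log_bound : (7 : ℝ) / 6 < Real.log (2 + Real.sqrt 3) := by
  have h3 : Real.sqrt 3 ^ 2 = 3 := Real.sq_sqrt (by norm_num)
  have hs : (1.25 : ℝ) < Real.sqrt 3 := by
    nlinarith [Real.sqrt_nonneg 3]
  have hpos : (0 : ℝ) < 2 + Real.sqrt 3 := by linarith
  rw [Real.lt_log_iff_exp_lt hpos]
  calc Real.exp (7 / 6 : ℝ) < 3.25 := stmt17_exp_lt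
    _ < 2 + Real.sqrt 3 := by linarith

lemma stmt17_f_pi6 :
    2 + Real.cos (Real.pi / 6) *
      Real.log ((1 - Real.cos (Real.pi / 6)) / (1 + Real.cos (Real.pi / 6))) < 0 := by
  have h3 : Real.sqrt 3 ^ 2 = 3 := Real.sq_sqrt (by norm_num)
  have hsnn := Real.sqrt_nonneg 3
  rw [Real.cos_pi_div_six]
  have hpos : (0 : ℝ) < 2 + Real.sqrt 3 := by linarith
  have harg : (1 - Real.sqrt 3 / 2) / (1 + Real.sqrt 3 / 2) = (2 - Real.sqrt 3) ^ 2 := by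
    rw [div_eq_iff (by positivity : (1 : ℝ) + Real.sqrt 3 / 2 ≠ 0)]
    linear_combination (1 - Real.sqrt 3 / 2) * h3
  have hinv : (2 : ℝ) - Real.sqrt 3 = (2 + Real.sqrt 3)⁻¹ := by
    have hm : ((2 : ℝ) - Real.sqrt 3) * (2 + Real.sqrt 3) = 1 := by linear_combination -h3
    exact eq_inv_of_mul_eq_one_left hm
  rw [harg, hinv, Real.log_pow, Real.log_inv]
  have hlog := stmt17_log_bound
  have hs : (12 : ℝ) / 7 < Real.sqrt 3 := by nlinarith
  have hlogpos : (0 : ℝ) < Real.log (2 + Real.sqrt 3) := by linarith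
  nlinarith [mul_lt_mul_of_pos_right hs hlogpos,
    mul_lt_mul_of_pos_left hlog (by linarith : (0:ℝ) < (12:ℝ)/7)]

lemma stmt17_f_pi3 :
    0 < 2 + Real.cos (Real.pi / 3) *
      Real.log ((1 - Real.cos (Real.pi / 3)) / (1 + Real.cos (Real.pi / 3))) := by
  rw [Real.cos_pi_div_three]
  have : ((1 : ℝ) - 1 / 2) / (1 + 1 / 2) = (3 : ℝ)⁻¹ := by norm_num
  rw [this, Real.log_inv]
  have h3 : Real.log 3 < 2 := by
    have := Real.log_lt_sub_one_of_pos (by norm_num : (0:ℝ) < 3) (by norm_num)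
    linarith
  nlinarith

/-- **The zero of the Alt–Caffarelli cone profile.** The function
`f(θ) = 2 + cos θ · log((1 − cos θ)/(1 + cos θ))` has a unique zero `θ₀` in `(0, π/2)`,
and `π/6 < θ₀ < π/3`. -/
theorem stmt_17 (f : ℝ → ℝ)
    (hf : ∀ θ, f θ = 2 + Real.cos θ * Real.log ((1 - Real.cos θ) / (1 + Real.cos θ))) :
    ∃ θ₀ : ℝ, (θ₀ ∈ Set.Ioo (0 : ℝ) (Real.pi / 2) ∧ f θ₀ = 0) ∧
      (∀ θ ∈ Set.Ioo (0 : ℝ) (Real.pi / 2), f θ = 0 → θ = θ₀) ∧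
      Real.pi / 6 < θ₀ ∧ θ₀ < Real.pi / 3 := by
  have hpi := Real.pi_pos
  -- continuity on [π/6, π/3]
  have hcont : ContinuousOn f (Set.Icc (Real.pi / 6) (Real.pi / 3)) := by
    have hfe : f = fun θ => 2 + Real.cos θ * Real.log ((1 - Real.cos θ) / (1 + Real.cos θ)) :=
      funext hf
    rw [hfe]
    apply continuousOn_const.add
    apply Real.continuous_cos.continuousOn.mul
    apply ContinuousOn.log
    · apply ContinuousOn.div
      · exact (continuous_const.sub Real.continuous_cos).continuousOn
      · exact (continuous_const.add Real.continuous_cos).continuousOn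
      · intro x hx
        have hcpos : 0 < Real.cos x := Real.cos_pos_of_mem_Ioo
          ⟨by linarith [hx.1], by linarith [hx.2]⟩
        linarith
    · intro x hx
      have hcpos : 0 < Real.cos x := Real.cos_pos_of_mem_Ioo
        ⟨by linarith [hx.1], by linarith [hx.2]⟩
      have hclt : Real.cos x < 1 := by
        have hx0 : (0:ℝ) < x := by linarith [hx.1]
        have := Real.cos_lt_cos_of_nonneg_of_le_pi (le_refl 0) (by linarith [hx.2]) hx0
        rwa [Real.cos_zero] at this
      have : 0 < (1 - Real.cos x) / (1 + Real.cos x) :=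
        div_pos (by linarith) (by linarith)
      exact ne_of_gt this
  -- endpoint signs
  have hfa : f (Real.pi / 6) < 0 := by rw [hf]; exact stmt17_f_pi6
  have hfb : 0 < f (Real.pi / 3) := by rw [hf]; exact stmt17_f_pi3
  -- IVT
  have hab : Real.pi / 6 ≤ Real.pi / 3 := by linarith
  have h0mem : (0 : ℝ) ∈ Set.Ioo (f (Real.pi / 6)) (f (Real.pi / 3)) := ⟨hfa, hfb⟩
  obtain ⟨θ₀, hθ₀mem, hθ₀val⟩ := intermediate_value_Ioo hab hcont h0mem
  have hθ₀Ioo : θ₀ ∈ Set.Ioo (0 : ℝ) (Real.pi / 2) :=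
    ⟨by linarith [hθ₀mem.1], by linarith [hθ₀mem.2]⟩
  refine ⟨θ₀, ⟨hθ₀Ioo, hθ₀val⟩, ?_, hθ₀mem.1, hθ₀mem.2⟩
  intro θ hθ hfθ
  rcases lt_trichotomy θ θ₀ with h | h | h
  · exfalso
    have := stmt17_mono hθ hθ₀Ioo h
    rw [← hf, ← hf] at this
    rw [hfθ, hθ₀val] at this
    exact lt_irrefl 0 this
  · exact h
  · exfalso
    have := stmt17_mono hθ₀Ioo hθ h
    rw [← hf, ← hf] at this
    rw [hfθ, hθ₀val] at this
    exact lt_irrefl 0 this
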